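/- Fix an integer K ≥ 1, a vector α ∈ (0,∞)^K, and β > 0, and define h(z, m, s) := ∏_{i=1}^K h_{α_i}^C(z_i, m_i, s) for z ∈ (0,∞)^K, m ∈ ℕ^K, s ≥ 0. Then for all such z, m, s the following identity holds: ∑_{i=1}^K [ (1/2)(α_i − β z_i) ∂h/∂z_i(z,m,s) + (1/2) z_i ∂²h/∂z_i²(z,m,s) ] = ((β+s)/2) ∑_{i=1}^K m_i [ h(z, m − e_i, s) − h(z, m, s) ] − (s(β+s)/2) ∂h/∂s(z,m,s), where terms with m_i = 0 are absent and the s-derivative is the derivative of the smooth map s ↦ h(z,m,s) (defined for s > −β). This is the local duality identity showing that K independent Cox–Ingersoll–Ross generators C_i f(z_i) = (1/2)(α_i − β z_i) f'(z_i) + (1/2) z_i f''(z_i) are dual, with respect to the duality function h, to the generator of the death process jumping from m to m − e_i at rate m_i(β+s)/2 coupled with the deterministic evolution ds/dt = −(1/2)s(β+s) (Theorem 4.1). -/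

import Mathlib

open Finset

/-- The gamma-type duality function `h_a^C(z, m, s)`. -/
noncomputable def hC (β a z : ℝ) (m : ℕ) (s : ℝ) : ℝ :=
  (Real.Gamma a / Real.Gamma (a + m)) * ((β + s) / β) ^ a * (β + s) ^ m * z ^ m *
    Real.exp (-s * z)

/-- The product duality function `h(z, m, s) = ∏ᵢ h_{αᵢ}^C(zᵢ, mᵢ, s)`. -/
noncomputable def Hprod {K : ℕ} (α : Fin K → ℝ) (β : ℝ)
    (z : Fin K → ℝ) (m : Fin K → ℕ) (s : ℝ) : ℝ :=
  ∏ i, hC β (α i) (z i) (m i) s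

/-- Partial derivative in the `i`-th coordinate. -/
noncomputable def pd {K : ℕ} (f : (Fin K → ℝ) → ℝ) (i : Fin K) (x : Fin K → ℝ) : ℝ :=
  deriv (fun w => f (Function.update x i w)) (x i)

/- ### Auxiliary material -/

noncomputable def Cc (β a : ℝ) (n : ℕ) (s : ℝ) : ℝ :=
  Real.Gamma a / Real.Gamma (a + n) * ((β + s) / β) ^ a * (β + s) ^ n

lemma hC_eq (β a z : ℝ) (n : ℕ) (s : ℝ) :
    hC β a z n s = Cc β a n s * (z ^ n * Real.exp (-s * z)) := by
  unfold hC Cc; ring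

lemma hasDerivAt_u (n : ℕ) (s x : ℝ) :
    HasDerivAt (fun w : ℝ => w ^ n * Real.exp (-s * w))
      (((n : ℝ) * x ^ (n - 1) - s * x ^ n) * Real.exp (-s * x)) x := by
  have h1 : HasDerivAt (fun w : ℝ => -s * w) (-s) x := by
    simpa using (hasDerivAt_id x).const_mul (-s)
  have he := h1.exp
  have := (hasDerivAt_pow n x).fun_mul he
  refine this.congr_deriv ?_
  ring

lemma deriv_hC_z (β a s : ℝ) (n : ℕ) :
    deriv (fun w => hC β a w n s)
      = fun x => Cc β a n s * (((n : ℝ) * x ^ (n - 1) - s * x ^ n) * Real.exp (-s * x)) := by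
  funext x
  have heq : (fun w => hC β a w n s)
      = fun w => Cc β a n s * (w ^ n * Real.exp (-s * w)) := by
    funext w; exact hC_eq β a w n s
  rw [heq]
  exact ((hasDerivAt_u n s x).const_mul (Cc β a n s)).deriv

lemma deriv_hC_z_apply (β a s x : ℝ) (n : ℕ) :
    deriv (fun w => hC β a w n s) x
      = Cc β a n s * (((n : ℝ) * x ^ (n - 1) - s * x ^ n) * Real.exp (-s * x)) := by
  have heq : (fun w => hC β a w n s)
      = fun w => Cc β a n s * (w ^ n * Real.exp (-s * w)) := by
    funext w; exact hC_eq β a w n s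
  rw [heq]
  exact ((hasDerivAt_u n s x).const_mul (Cc β a n s)).deriv

lemma deriv2_hC_z (β a s x : ℝ) (n : ℕ) :
    deriv (deriv (fun w => hC β a w n s)) x
      = Cc β a n s * (((n : ℝ) * (((n - 1 : ℕ) : ℝ) * x ^ (n - 1 - 1) - s * x ^ (n - 1))
          - s * ((n : ℝ) * x ^ (n - 1) - s * x ^ n)) * Real.exp (-s * x)) := by
  rw [deriv_hC_z]
  have h1 := (((hasDerivAt_u (n - 1) s x).const_mul (n : ℝ)).fun_sub
    ((hasDerivAt_u n s x).const_mul s)).const_mul (Cc β a n s)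
  have heq : (fun x : ℝ => Cc β a n s * (((n : ℝ) * x ^ (n - 1) - s * x ^ n) * Real.exp (-s * x)))
      = fun x : ℝ => Cc β a n s * ((n : ℝ) * (x ^ (n - 1) * Real.exp (-s * x))
          - s * (x ^ n * Real.exp (-s * x))) := by
    funext w; ring
  rw [heq, h1.deriv]
  ring

lemma hasDerivAt_hC_s (β a x : ℝ) (n : ℕ) (s : ℝ) (hb : (β + s) / β ≠ 0) :
    HasDerivAt (fun u => hC β a x n u)
      (Real.Gamma a / Real.Gamma (a + n) * x ^ n *
        ((1 / β * a * ((β + s) / β) ^ (a - 1) * (β + s) ^ n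
          + ((β + s) / β) ^ a * ((n : ℝ) * (β + s) ^ (n - 1))
          - ((β + s) / β) ^ a * (β + s) ^ n * x) * Real.exp (-s * x))) s := by
  have h0 : HasDerivAt (fun u : ℝ => (β + u) / β) (1 / β) s := by
    simpa using ((hasDerivAt_id s).const_add β).div_const β
  have hr : HasDerivAt (fun u : ℝ => ((β + u) / β) ^ a)
      (1 / β * a * ((β + s) / β) ^ (a - 1)) s := h0.rpow_const (Or.inl hb)
  have hp : HasDerivAt (fun u : ℝ => (β + u) ^ n) ((n : ℝ) * (β + s) ^ (n - 1)) s := by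
    simpa using ((hasDerivAt_id s).const_add β).fun_pow n
  have h1 : HasDerivAt (fun u : ℝ => -u * x) (-x) s := by
    simpa using (hasDerivAt_id s).neg.mul_const x
  have he := h1.exp
  have h := ((hr.fun_mul hp).fun_mul he).const_mul (Real.Gamma a / Real.Gamma (a + n) * x ^ n)
  have heq : (fun u => hC β a x n u)
      = fun u => Real.Gamma a / Real.Gamma (a + n) * x ^ n *
          ((((β + u) / β) ^ a * (β + u) ^ n) * Real.exp (-u * x)) := by
    funext u; unfold hC; ring
  rw [heq]
  refine h.congr_deriv ?_
  ring

lemma mul_pow_pred (x : ℝ) (hx : x ≠ 0) (n : ℕ) :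
    (n : ℝ) * x ^ (n - 1) = (n : ℝ) * x ^ n / x := by
  cases n with
  | zero => simp
  | succ k =>
    have : x ^ (k + 1) = x ^ k * x := pow_succ x k
    rw [Nat.add_sub_cancel, this]
    field_simp

lemma key (β a s x : ℝ) (ha : 0 < a) (hβ : 0 < β) (hs : 0 ≤ s) (hx : 0 < x) (n : ℕ) :
    1 / 2 * (a - β * x) * deriv (fun w => hC β a w n s) x
      + 1 / 2 * x * deriv (deriv (fun w => hC β a w n s)) x
    = (β + s) / 2 * (n : ℝ) * (hC β a x (n - 1) s - hC β a x n s)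
      - s * (β + s) / 2 * deriv (fun u => hC β a x n u) s := by
  have hβs : 0 < β + s := by linarith
  have hb : (β + s) / β ≠ 0 := by positivity
  rw [deriv2_hC_z, deriv_hC_z_apply, (hasDerivAt_hC_s β a x n s hb).deriv]
  have htpos : (0 : ℝ) < (β + s) / β := by positivity
  have hta : ((β + s) / β) ^ (a - 1) = ((β + s) / β) ^ a / ((β + s) / β) := by
    rw [Real.rpow_sub htpos, Real.rpow_one]
  rw [hta]
  cases n with
  | zero =>
    unfold hC Cc
    simp only [Nat.cast_zero, Nat.zero_sub, pow_zero]
    have hΓ : Real.Gamma (a + (0 : ℕ)) ≠ 0 := by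
      push_cast
      simpa using (Real.Gamma_pos_of_pos ha).ne'
    field_simp
    ring
  | succ k =>
    have hk0 : (0 : ℝ) < a + k := by positivity
    have hΓk : Real.Gamma (a + (k : ℕ)) ≠ 0 := (Real.Gamma_pos_of_pos hk0).ne'
    have hΓ : Real.Gamma (a + ((k + 1 : ℕ) : ℝ)) = (a + k) * Real.Gamma (a + k) := by
      have h1 : a + ((k + 1 : ℕ) : ℝ) = (a + k) + 1 := by push_cast; ring
      rw [h1, Real.Gamma_add_one hk0.ne']
    have hxx : ((k : ℝ)) * x ^ (k - 1) = (k : ℝ) * x ^ k / x := mul_pow_pred x hx.ne' k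
    unfold hC Cc
    simp only [Nat.add_sub_cancel, hΓ, hxx]
    field_simp
    ring

/-- Local duality identity for `K` independent Cox--Ingersoll--Ross generators (Theorem 4.1). -/
theorem stmt0 (K : ℕ) (hK : 1 ≤ K) (α : Fin K → ℝ) (hα : ∀ i, 0 < α i)
    (β : ℝ) (hβ : 0 < β) (z : Fin K → ℝ) (hz : ∀ i, 0 < z i)
    (m : Fin K → ℕ) (s : ℝ) (hs : 0 ≤ s) :
    ∑ i, ((1 / 2) * (α i - β * z i) * pd (fun w => Hprod α β w m s) i z
        + (1 / 2) * z i * pd (pd (fun w => Hprod α β w m s) i) i z)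
      = (β + s) / 2 *
          ∑ i, (m i : ℝ) * (Hprod α β z (m - Pi.single i 1) s - Hprod α β z m s)
        - s * (β + s) / 2 * deriv (fun u => Hprod α β z m u) s := by
  have hβs : 0 < β + s := by linarith
  have hb : (β + s) / β ≠ 0 := by positivity
  set P : Fin K → ℝ := fun i => ∏ j ∈ univ.erase i, hC β (α j) (z j) (m j) s with hPdef
  -- one-variable slice of Hprod
  have hslice : ∀ i, (fun w => Hprod α β (Function.update z i w) m s)
      = fun w => P i * hC β (α i) w (m i) s := by
    intro i
    funext w
    unfold Hprod
    rw [← Finset.mul_prod_erase univ _ (mem_univ i), Function.update_self]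
    rw [mul_comm]
    congr 1
    exact Finset.prod_congr rfl fun j hj => by
      rw [Function.update_of_ne (mem_erase.1 hj).1]
  have hP1 : ∀ i, pd (fun w => Hprod α β w m s) i z
      = P i * deriv (fun w => hC β (α i) w (m i) s) (z i) := by
    intro i
    unfold pd
    rw [hslice i]
    exact deriv_const_mul_field _
  have hP2 : ∀ i, pd (pd (fun w => Hprod α β w m s) i) i z
      = P i * deriv (deriv (fun w => hC β (α i) w (m i) s)) (z i) := by
    intro i
    unfold pd
    have hmid : (fun w => deriv
        (fun w' => Hprod α β (Function.update (Function.update z i w) i w') m s)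
        (Function.update z i w i))
        = fun w => P i * deriv (fun w' => hC β (α i) w' (m i) s) w := by
      funext w
      rw [Function.update_self]
      have : (fun w' => Hprod α β (Function.update (Function.update z i w) i w') m s)
          = fun w' => P i * hC β (α i) w' (m i) s := by
        funext w'
        rw [Function.update_idem]
        exact congrFun (hslice i) w'
      rw [this]
      exact deriv_const_mul_field _
    rw [hmid]
    exact deriv_const_mul_field _
  have hHm : ∀ i, Hprod α β z m s = P i * hC β (α i) (z i) (m i) s := by
    intro i
    unfold Hprod
    rw [← Finset.mul_prod_erase univ _ (mem_univ i), mul_comm]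
  have hHm' : ∀ i, Hprod α β z (m - Pi.single i 1) s
      = P i * hC β (α i) (z i) (m i - 1) s := by
    intro i
    unfold Hprod
    rw [← Finset.mul_prod_erase univ _ (mem_univ i), mul_comm]
    have h1 : (m - Pi.single i 1 : Fin K → ℕ) i = m i - 1 := by simp
    rw [h1]
    congr 1
    exact Finset.prod_congr rfl fun j hj => by
      have hne : j ≠ i := (mem_erase.1 hj).1
      have h2 : (m - Pi.single i 1 : Fin K → ℕ) j = m j := by
        simp [Pi.single_eq_of_ne hne]
      rw [h2]
  -- derivative in s of Hprod
  have hds : deriv (fun u => Hprod α β z m u) s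
      = ∑ i, P i * deriv (fun u => hC β (α i) (z i) (m i) u) s := by
    have hfac : ∀ i : Fin K,
        HasDerivAt (fun u => hC β (α i) (z i) (m i) u)
          (deriv (fun u => hC β (α i) (z i) (m i) u) s) s := by
      intro i
      have h := hasDerivAt_hC_s β (α i) (z i) (m i) s hb
      exact h.deriv ▸ h
    have h := HasDerivAt.fun_finsetProd (u := univ)
      (f := fun i u => hC β (α i) (z i) (m i) u)
      (f' := fun i => deriv (fun u => hC β (α i) (z i) (m i) u) s)
      (x := s) (fun i _ => hfac i)
    have heq : (fun u => Hprod α β z m u)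
        = (∏ i ∈ univ, (fun i u => hC β (α i) (z i) (m i) u) i ·) := by
      funext u; unfold Hprod; simp
    rw [heq, h.deriv]
    simp [smul_eq_mul, hPdef]
  rw [hds, Finset.mul_sum, Finset.mul_sum, ← Finset.sum_sub_distrib]
  apply Finset.sum_congr rfl
  intro i _
  rw [hP1 i, hP2 i, hHm i, hHm' i]
  have hkey := key β (α i) s (z i) (hα i) hβ hs (hz i) (m i)
  linear_combination P i * hkey
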